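/- The class of almost periodic sequences is closed under finite automaton mappings: if F is a finite automaton and ω is almost periodic, then F(ω) is almost periodic. -/

import Mathlib

/-- The factor of `ω` starting at `i` of length `n`. -/
def seg {α : Type*} (ω : ℕ → α) (i n : ℕ) : List α :=
  (List.range n).map (fun k => ω (i + k))

/-- `x` occurs in `ω` at position `i`. -/
def OccursAt {α : Type*} (ω : ℕ → α) (x : List α) (i : ℕ) : Prop :=
  seg ω i x.length = x

/-- Strongly almost periodic: every factor occurs in every sufficiently long factor. -/
def SAP {α : Type*} (ω : ℕ → α) : Prop :=
  ∀ x : List α, (∃ i, OccursAt ω x i) →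
    ∃ l, ∀ j, ∃ i, j ≤ i ∧ i + x.length ≤ j + l ∧ OccursAt ω x i

/-- Almost periodic: every factor occurring infinitely often occurs in every
sufficiently long factor. -/
def AP {α : Type*} (ω : ℕ → α) : Prop :=
  ∀ x : List α, {i | OccursAt ω x i}.Infinite →
    ∃ l, ∀ j, ∃ i, j ≤ i ∧ i + x.length ≤ j + l ∧ OccursAt ω x i

/-- Eventually strongly almost periodic: some suffix is strongly almost periodic. -/
def EAP {α : Type*} (ω : ℕ → α) : Prop :=
  ∃ n, SAP (fun i => ω (n + i))

/-- The state sequence of a finite automaton with transition `f` and initial state `q0`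
running on input `ω`. -/
def autoStates {σ δ q : Type*} (f : q → σ → q × δ) (q0 : q) (ω : ℕ → σ) : ℕ → q
  | 0 => q0
  | n + 1 => (f (autoStates f q0 ω n) (ω n)).1

/-- The output sequence `F(ω)` of a finite automaton. -/
def autoOutput {σ δ q : Type*} (f : q → σ → q × δ) (q0 : q) (ω : ℕ → σ) (n : ℕ) : δ :=
  (f (autoStates f q0 ω n) (ω n)).2

open Classical

section A
variable {α β : Type*} (τ : ℕ → α)

@[simp] theorem seg_length (i n : ℕ) : (seg τ i n).length = n := by
  simp [seg]

@[simp] theorem seg_zero (i : ℕ) : seg τ i 0 = [] := by simp [seg]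

theorem seg_add (i m k : ℕ) : seg τ i (m + k) = seg τ i m ++ seg τ (i + m) k := by
  simp only [seg, List.range_add, List.map_append, List.map_map]
  congr 1
  apply List.map_congr_left
  intro a _
  simp [Function.comp]
  ring_nf

theorem seg_map (g : α → β) (i n : ℕ) : seg (fun t => g (τ t)) i n = (seg τ i n).map g := by
  simp [seg, List.map_map, Function.comp]

theorem seg_shift (e i n : ℕ) : seg (fun t => τ (e + t)) i n = seg τ (e + i) n := by
  simp only [seg]
  apply List.map_congr_left
  intro a _
  ring_nf

theorem seg_get (i n : ℕ) (k : ℕ) (hk : k < n) :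
    (seg τ i n).get ⟨k, by simp [hk]⟩ = τ (i + k) := by
  simp [seg]

theorem seg_eq_iff {i j n : ℕ} : seg τ i n = seg τ j n ↔ ∀ k < n, τ (i + k) = τ (j + k) := by
  constructor
  · intro h k hk
    have := congrArg (fun l => l[k]?) h
    simpa [seg, List.getElem?_map, List.getElem?_range hk] using this
  · intro h
    apply List.ext_get (by simp)
    intro k h1 h2
    simp only [seg_length] at h1
    rw [seg_get τ i n k h1, seg_get τ j n k h1]
    exact h k h1

theorem seg_ext {i j n : ℕ} (h : ∀ k < n, τ (i + k) = τ (j + k)) : seg τ i n = seg τ j n :=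
  (seg_eq_iff τ).2 h

theorem seg_extract {j L o n : ℕ} (h : o + n ≤ L) :
    ((seg τ j L).drop o).take n = seg τ (j + o) n := by
  apply List.ext_get
  · simp only [List.length_take, List.length_drop, seg_length]
    omega
  · intro k h1 h2
    simp only [List.length_take, List.length_drop, seg_length] at h1
    simp only [List.get_eq_getElem, List.getElem_take, List.getElem_drop]
    have hk : k < n := by omega
    simp only [seg]
    simp only [List.getElem_map]
    simp only [List.getElem_range]
    congr 1
    omega

theorem occursAt_def {x : List α} {i : ℕ} : OccursAt τ x i ↔ seg τ i x.length = x := Iff.rfl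

theorem occursAt_seg (i n : ℕ) : OccursAt τ (seg τ i n) i := by
  simp [OccursAt]

theorem occursAt_of_seg_eq {i n j : ℕ} (h : seg τ i n = seg τ j n) :
    OccursAt τ (seg τ j n) i := by
  simpa [OccursAt] using h

theorem seg_of_occursAt {x : List α} {i : ℕ} (h : OccursAt τ x i) {o n : ℕ}
    (hn : o + n ≤ x.length) : seg τ (i + o) n = (x.drop o).take n := by
  conv_rhs => rw [← h]
  rw [seg_extract τ hn]

/-- from an infix of a seg, get a positioned occurrence -/
theorem infix_seg {x : List α} {j L : ℕ} (h : x <:+: seg τ j L) :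
    ∃ o, o + x.length ≤ L ∧ OccursAt τ x (j + o) := by
  obtain ⟨s, t, hst⟩ := h
  refine ⟨s.length, ?_, ?_⟩
  · have := congrArg List.length hst
    simp at this; omega
  · have hlen : s.length + x.length ≤ L := by
      have := congrArg List.length hst
      simp at this; omega
    have hassoc : s ++ x ++ t = s ++ (x ++ t) := by simp
    have : ((seg τ j L).drop s.length).take x.length = x := by
      rw [← hst, hassoc, List.drop_left, List.take_left]
    rw [OccursAt, ← this, seg_extract τ hlen]
    simp

theorem occursAt_infix {x : List α} {j L o : ℕ} (ho : o + x.length ≤ L)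
    (h : OccursAt τ x (j + o)) : x <:+: seg τ j L := by
  have hx : x = ((seg τ j L).drop o).take x.length := by
    rw [seg_extract τ ho]; exact h.symm
  rw [hx]
  exact ((List.take_prefix _ _).isInfix).trans ((List.drop_suffix _ _).isInfix)

def Rec (τ : ℕ → α) (x : List α) : Prop := {i | OccursAt τ x i}.Infinite

theorem rec_nil : Rec τ ([] : List α) := by
  apply Set.infinite_of_injective_forall_mem (f := id) Function.injective_id
  intro i; simp [OccursAt]

theorem rec_empty_occurs (x : List α) (h : Rec τ x) : ∃ i, OccursAt τ x i :=
  h.nonempty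

theorem rec_unbounded {x : List α} (h : Rec τ x) (N : ℕ) :
    ∃ i, N ≤ i ∧ OccursAt τ x i := by
  obtain ⟨i, hi, hN⟩ := h.exists_gt N
  exact ⟨i, le_of_lt hN, hi⟩

theorem rec_infix {x y : List α} (h : Rec τ x) (hxy : y <:+: x) : Rec τ y := by
  obtain ⟨s, t, hst⟩ := hxy
  have key : ∀ i, OccursAt τ x i → OccursAt τ y (i + s.length) := by
    intro i hi
    have hlen : s.length + y.length ≤ x.length := by
      have := congrArg List.length hst; simp at this; omega
    have := seg_of_occursAt τ hi hlen
    have hy : (x.drop s.length).take y.length = y := by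
      have hassoc : s ++ y ++ t = s ++ (y ++ t) := by simp
      rw [← hst, hassoc, List.drop_left, List.take_left]
    rw [OccursAt, this, hy]
  have hsub : (fun i => i + s.length) '' {i | OccursAt τ x i} ⊆ {i | OccursAt τ y i} := by
    rintro _ ⟨i, hi, rfl⟩; exact key i hi
  have hinj : Function.Injective (fun i : ℕ => i + s.length) := fun a b hab => by simpa using hab
  have himg : ((fun i => i + s.length) '' {i | OccursAt τ x i}).Infinite := h.image hinj.injOn
  exact himg.mono hsub

end A

section B
variable {α β : Type*} (τ : ℕ → α)

theorem finite_length_lists [Finite α] (n : ℕ) : {w : List α | w.length = n}.Finite := by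
  have : {w : List α | w.length = n} ⊆ (fun f : Fin n → α => List.ofFn f) '' Set.univ := by
    intro w hw
    simp only [Set.mem_setOf_eq] at hw
    subst hw
    exact ⟨fun k => w.get k, Set.mem_univ _, List.ofFn_get w⟩
  exact Set.Finite.subset (Set.Finite.image _ (Set.finite_univ)) this

theorem seg_eq_ofFn_iff {n : ℕ} {i : ℕ} {ff : Fin n → α} :
    seg τ i n = List.ofFn ff ↔ ∀ k : Fin n, τ (i + k.val) = ff k := by
  constructor
  · intro h k
    have := congrArg (fun l => l[(k:ℕ)]?) h
    simpa [seg, List.getElem?_map, List.getElem?_range k.isLt, List.getElem?_ofFn] using this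
  · intro h
    apply List.ext_get (by simp)
    intro k h1 h2
    simp only [seg_length] at h1
    rw [seg_get τ i n k h1]
    simp only [List.get_ofFn]
    exact h ⟨k, by simpa using h2⟩

/-- pigeonhole: some word of each length is recurrent -/
theorem exists_rec_of_length [Finite α] (n : ℕ) : ∃ x : List α, x.length = n ∧ Rec τ x := by
  haveI : Infinite {i : ℕ // True} := Infinite.of_injective (fun n => ⟨n, trivial⟩) (fun a b h => by simpa using h)
  have := Finite.exists_infinite_fiber (fun i : {i : ℕ // True} => (fun k : Fin n => τ (i.val + k.val)))
  obtain ⟨ff, hff⟩ := this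
  refine ⟨List.ofFn ff, by simp, ?_⟩
  rw [Set.infinite_coe_iff] at hff
  have : Subtype.val '' ((fun i : {i : ℕ // True} => (fun k : Fin n => τ (i.val + k.val))) ⁻¹' {ff}) ⊆ {i | OccursAt τ (List.ofFn ff) i} := by
    rintro _ ⟨⟨i, _⟩, hi, rfl⟩
    simp only [Set.mem_preimage, Set.mem_singleton_iff] at hi
    show OccursAt τ (List.ofFn ff) i
    rw [OccursAt, List.length_ofFn, seg_eq_ofFn_iff]
    intro k; exact congrFun hi k
  exact ((hff.image (Subtype.val_injective.injOn)).mono this)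

/-- every sufficiently late factor of given length is recurrent -/
theorem late_rec [Finite α] (n : ℕ) : ∃ N, ∀ i, N ≤ i → Rec τ (seg τ i n) := by
  classical
  set B : Set (List α) := {w | w.length = n ∧ ¬ Rec τ w} with hB
  have hBfin : B.Finite := (finite_length_lists n).subset (fun w hw => hw.1)
  have hU : (⋃ w ∈ B, {i | OccursAt τ w i}).Finite := by
    apply Set.Finite.biUnion hBfin
    intro w hw
    exact Set.not_infinite.mp hw.2
  obtain ⟨N, hN⟩ := hU.bddAbove
  refine ⟨N + 1, fun i hi => ?_⟩
  by_contra hrec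
  have hiB : seg τ i n ∈ B := ⟨by simp, hrec⟩
  have : i ∈ ⋃ w ∈ B, {j | OccursAt τ w j} := by
    refine Set.mem_biUnion hiB ?_
    exact occursAt_seg τ i n
  have := hN this
  omega

/-- upgrade a "late syndetic" occurrence property to the AP clause -/
theorem ap_clause_of_late {x : List α} {N l : ℕ}
    (h : ∀ j, N ≤ j → ∃ i, j ≤ i ∧ i + x.length ≤ j + l ∧ OccursAt τ x i) :
    ∃ l', ∀ j, ∃ i, j ≤ i ∧ i + x.length ≤ j + l' ∧ OccursAt τ x i := by
  refine ⟨N + l, fun j => ?_⟩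
  rcases le_or_gt N j with hj | hj
  · obtain ⟨i, h1, h2, h3⟩ := h j hj
    exact ⟨i, h1, by omega, h3⟩
  · obtain ⟨i, h1, h2, h3⟩ := h N (le_refl N)
    exact ⟨i, by omega, by omega, h3⟩

theorem occursAt_shift {x : List α} {e t : ℕ} :
    OccursAt (fun u => τ (e + u)) x t ↔ OccursAt τ x (e + t) := by
  unfold OccursAt
  rw [seg_shift]

/-- AP of a suffix implies AP -/
theorem ap_of_suffix {e : ℕ} (h : AP (fun t => τ (e + t))) : AP τ := by
  intro x hx
  set ys := fun t => τ (e + t) with hys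
  have hx' : {t | OccursAt ys x t}.Infinite := by
    have hsub : (fun t => e + t) '' {t | OccursAt ys x t} = {i | OccursAt τ x i} ∩ Set.Ici e := by
      ext i
      constructor
      · rintro ⟨t, ht, rfl⟩
        exact ⟨(occursAt_shift τ).mp ht, by simp⟩
      · rintro ⟨hi, hie⟩
        refine ⟨i - e, ?_, by simp at hie ⊢; omega⟩
        rw [Set.mem_setOf_eq, occursAt_shift τ]
        have : e + (i - e) = i := by simp at hie; omega
        rwa [this]
    by_contra hfin
    rw [Set.not_infinite] at hfin
    have : ({i | OccursAt τ x i} ∩ Set.Ici e).Finite := by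
      rw [← hsub]; exact hfin.image _
    have : {i | OccursAt τ x i}.Finite := by
      have := this.union (Set.finite_Iio e)
      apply this.subset
      intro i hi
      rcases lt_or_ge i e with h' | h'
      · exact Or.inr h'
      · exact Or.inl ⟨hi, h'⟩
    exact hx this
  obtain ⟨l, hl⟩ := h x hx'
  apply ap_clause_of_late τ (N := e) (l := l)
  intro j hj
  obtain ⟨t, h1, h2, h3⟩ := hl (j - e)
  exact ⟨e + t, by omega, by omega, (occursAt_shift τ).mp h3⟩

/-- AP is closed under codings (letterwise maps) -/
theorem ap_coding [Finite α] (g : α → β) (h : AP τ) : AP (fun t => g (τ t)) := by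
  intro x hx
  set n := x.length with hn
  haveI : Infinite {i // i ∈ {i | OccursAt (fun t => g (τ t)) x i}} := by
    rw [← Set.infinite_coe_iff] at hx; exact hx
  obtain ⟨ff, hff⟩ := Finite.exists_infinite_fiber
    (fun i : {i // i ∈ {i | OccursAt (fun t => g (τ t)) x i}} => (fun k : Fin n => τ (i.val + k.val)))
  rw [Set.infinite_coe_iff] at hff
  set w := List.ofFn ff with hw
  have hwlen : w.length = n := by simp [hw]
  have hmapw : ∀ i, OccursAt τ w i → OccursAt (fun t => g (τ t)) x i → x = w.map g := by
    intro i hiw hix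
    rw [OccursAt] at hix hiw
    have e1 : x = seg (fun t => g (τ t)) i n := by rw [hn]; exact hix.symm
    have e2 : seg τ i n = w := by rw [← hwlen]; exact hiw
    rw [e1, seg_map, e2]
  -- pick a member of the fiber to get x = w.map g and recurrence of w
  have hrecw : Rec τ w := by
    have hsub : Subtype.val '' ((fun i : {i // i ∈ {i | OccursAt (fun t => g (τ t)) x i}} => (fun k : Fin n => τ (i.val + k.val))) ⁻¹' {ff}) ⊆ {i | OccursAt τ w i} := by
      rintro _ ⟨⟨i, hi⟩, hfib, rfl⟩
      simp only [Set.mem_preimage, Set.mem_singleton_iff] at hfib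
      show OccursAt τ w i
      rw [OccursAt, hw, List.length_ofFn, seg_eq_ofFn_iff]
      intro k; exact congrFun hfib k
    exact (hff.image (Subtype.val_injective.injOn)).mono hsub
  obtain ⟨i0, hi0⟩ := hrecw.nonempty
  -- need a common occurrence: members of fiber occur in both
  obtain ⟨⟨i1, hi1⟩, hfib1⟩ := hff.nonempty
  simp only [Set.mem_preimage, Set.mem_singleton_iff] at hfib1
  have hi1w : OccursAt τ w i1 := by
    rw [OccursAt, hw, List.length_ofFn, seg_eq_ofFn_iff]
    intro k; exact congrFun hfib1 k
  have hxw : x = w.map g := hmapw i1 hi1w hi1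
  obtain ⟨l, hl⟩ := h w hrecw
  refine ⟨l, fun j => ?_⟩
  obtain ⟨i, h1, h2, h3⟩ := hl j
  refine ⟨i, h1, ?_, ?_⟩
  · have : x.length = w.length := by rw [hxw]; simp
    omega
  · have key : seg (fun t => g (τ t)) i n = x := by
      rw [seg_map, hxw]
      congr 1
      rw [← hwlen]
      exact h3
    rw [OccursAt, ← hn]
    exact key

end B

section Lang
variable {Λ : Type*}

/-- A "good" language inside ℒ: sub-language, factorial, with words of every length. -/
def GoodIn (ℒ L : Set (List Λ)) : Prop :=
  L ⊆ ℒ ∧ (∀ ⦃x w : List Λ⦄, w ∈ L → x <:+: w → x ∈ L) ∧ (∀ n, ∃ w ∈ L, w.length = n)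

theorem exists_minimal_good [Finite Λ] (ℒ : Set (List Λ)) (hℒ : GoodIn ℒ ℒ) :
    ∃ L, GoodIn ℒ L ∧ ∀ L', GoodIn ℒ L' → L' ⊆ L → L' = L := by
  have H : ∀ c ⊆ {L | GoodIn ℒ L}, IsChain (· ⊆ ·) c → c.Nonempty →
      ∃ lb ∈ {L | GoodIn ℒ L}, ∀ s ∈ c, lb ⊆ s := by
    intro c hcS hchain hcne
    refine ⟨⋂₀ c, ⟨?_, ?_, ?_⟩, fun s hs => Set.sInter_subset_of_mem hs⟩
    · obtain ⟨L0, hL0⟩ := hcne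
      exact (Set.sInter_subset_of_mem hL0).trans (hcS hL0).1
    · intro x w hw hxw L hL
      exact (hcS hL).2.1 (hw L hL) hxw
    · intro n
      -- level sets
      have hFin : ∀ L ∈ c, ({w ∈ L | w.length = n} : Set (List Λ)).Finite :=
        fun L _ => (finite_length_lists n).subset (fun w hw => hw.2)
      have hNe : ∀ L ∈ c, ({w ∈ L | w.length = n} : Set (List Λ)).Nonempty := by
        intro L hL
        obtain ⟨w, hw1, hw2⟩ := (hcS hL).2.2 n
        exact ⟨w, hw1, hw2⟩
      obtain ⟨L0, hL0⟩ := hcne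
      set cards := (fun L => ({w ∈ L | w.length = n} : Set (List Λ)).ncard) '' c with hcards
      have hcne' : cards.Nonempty := ⟨_, L0, hL0, rfl⟩
      have hmem := Nat.sInf_mem hcne'
      obtain ⟨Lm, hLm, hLmcard⟩ := hmem
      have hsub : ∀ L ∈ c, {w ∈ Lm | w.length = n} ⊆ {w ∈ L | w.length = n} := by
        intro L hL
        rcases eq_or_ne L Lm with rfl | hne
        · exact le_refl _
        · rcases hchain hL hLm hne with h | h
          · -- L ⊆ Lm
            have hsub2 : {w ∈ L | w.length = n} ⊆ {w ∈ Lm | w.length = n} :=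
              fun w hw => ⟨h hw.1, hw.2⟩
            have hcard : ({w ∈ Lm | w.length = n} : Set (List Λ)).ncard ≤
                ({w ∈ L | w.length = n} : Set (List Λ)).ncard := by
              have h1 : ({w ∈ Lm | w.length = n} : Set (List Λ)).ncard = sInf cards := hLmcard
              rw [h1]
              exact Nat.sInf_le ⟨L, hL, rfl⟩
            have := Set.eq_of_subset_of_ncard_le hsub2 hcard (hFin Lm hLm)
            rw [this]
          · -- Lm ⊆ L
            exact fun w hw => ⟨h hw.1, hw.2⟩
      obtain ⟨w, hw1, hw2⟩ := hNe Lm hLm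
      refine ⟨w, ?_, hw2⟩
      intro L hL
      exact (hsub L hL ⟨hw1, hw2⟩).1
  obtain ⟨m, _, hmin⟩ := zorn_superset_nonempty {L | GoodIn ℒ L} H ℒ hℒ
  exact ⟨m, hmin.1, fun L' h1 h2 => Set.Subset.antisymm h2 (hmin.2 h1 h2)⟩

/-- minimal good languages are uniformly self-recurrent -/
theorem usr_of_minimal [Finite Λ] {ℒ L : Set (List Λ)} (hL : GoodIn ℒ L)
    (hmin : ∀ L', GoodIn ℒ L' → L' ⊆ L → L' = L) :
    ∀ v ∈ L, ∃ ℓ, ∀ w ∈ L, ℓ ≤ w.length → v <:+: w := by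
  intro v hv
  by_contra hno
  push_neg at hno
  -- arbitrarily long avoiding words
  have havoid : ∀ m, ∃ w ∈ L, m ≤ w.length ∧ ¬ v <:+: w := by
    intro m
    obtain ⟨w, hw1, hw2, hw3⟩ := hno m
    exact ⟨w, hw1, hw2, hw3⟩
  set L' : Set (List Λ) := {x ∈ L | ∀ m, ∃ w ∈ L, m ≤ w.length ∧ ¬ v <:+: w ∧ x <:+: w} with hL'
  have hgood : GoodIn ℒ L' := by
    refine ⟨fun x hx => hL.1 hx.1, ?_, ?_⟩
    · intro x w hw hxw
      refine ⟨hL.2.1 hw.1 hxw, fun m => ?_⟩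
      obtain ⟨u, hu1, hu2, hu3, hu4⟩ := hw.2 m
      exact ⟨u, hu1, hu2, hu3, hxw.trans hu4⟩
    · intro n
      -- pigeonhole: some length-n prefix of long avoiders appears for arbitrarily large m
      classical
      by_contra hnone
      push_neg at hnone
      -- each length-n word x has a bound m(x) beyond which no long avoider contains it... derive contradiction
      have key : ∀ x : List Λ, ∃ m, x.length = n → ∀ w ∈ L, m ≤ w.length → ¬ v <:+: w → ¬ x <:+: w := by
        intro x
        by_contra hk
        push_neg at hk
        have hxlen : x.length = n := (hk 0).1
        have hk' : ∀ m, ∃ w ∈ L, m ≤ w.length ∧ ¬ v <:+: w ∧ x <:+: w := fun m => (hk m).2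
        have hxL : x ∈ L := by
          obtain ⟨w, hw1, _, _, hw4⟩ := hk' 0
          exact hL.2.1 hw1 hw4
        have : x ∈ L' := by
          refine ⟨hxL, fun m => ?_⟩
          obtain ⟨w, hw1, hw2, hw3, hw4⟩ := hk' m
          exact ⟨w, hw1, hw2, hw3, hw4⟩
        exact hnone x this hxlen
      choose M hM using key
      -- uniform bound over the finitely many length-n words
      obtain ⟨Mb, hMb⟩ := (Set.Finite.image (fun x => M x) (finite_length_lists (α := Λ) n)).bddAbove
      obtain ⟨w, hw1, hw2, hw3⟩ := havoid (max (Mb + 1) n)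
      -- the length-n prefix of w
      set x := w.take n with hx
      have hxlen : x.length = n := by simp [hx]; omega
      have hxw : x <:+: w := (List.take_prefix n w).isInfix
      have hMx : M x ≤ Mb := hMb ⟨x, hxlen, rfl⟩
      exact hM x hxlen w hw1 (by omega) hw3 hxw
  have := hmin L' hgood (fun x hx => hx.1)
  -- but v ∉ L'
  have hvL' : v ∈ L' := this ▸ hv
  obtain ⟨w, _, _, hw3, hw4⟩ := hvL'.2 0
  exact hw3 hw4

/-- two distinct minimal-style languages with usr are eventually disjoint -/
theorem eventually_disjoint {L1 L2 : Set (List Λ)}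
    (h1fac : ∀ ⦃x w : List Λ⦄, w ∈ L1 → x <:+: w → x ∈ L1)
    (h2fac : ∀ ⦃x w : List Λ⦄, w ∈ L2 → x <:+: w → x ∈ L2)
    (h1 : ∀ v ∈ L1, ∃ ℓ, ∀ w ∈ L1, ℓ ≤ w.length → v <:+: w)
    (h2 : ∀ v ∈ L2, ∃ ℓ, ∀ w ∈ L2, ℓ ≤ w.length → v <:+: w)
    (hne : L1 ≠ L2) :
    ∃ m, ∀ w, m ≤ w.length → ¬ (w ∈ L1 ∧ w ∈ L2) := by
  by_contra hno
  push_neg at hno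
  apply hne
  have common : ∀ m, ∃ w, m ≤ w.length ∧ w ∈ L1 ∧ w ∈ L2 := by
    intro m
    obtain ⟨w, hw1, hw2, hw3⟩ := hno m
    exact ⟨w, hw1, hw2, hw3⟩
  ext v
  constructor
  · intro hv
    obtain ⟨ℓ, hℓ⟩ := h1 v hv
    obtain ⟨w, hwlen, hw1, hw2⟩ := common ℓ
    exact h2fac hw2 (hℓ w hw1 hwlen)
  · intro hv
    obtain ⟨ℓ, hℓ⟩ := h2 v hv
    obtain ⟨w, hwlen, hw1, hw2⟩ := common ℓ
    exact h1fac hw1 (hℓ w hw2 hwlen)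

/-- infix of a mapped list comes from an infix -/
theorem infix_map_iff {β : Type*} (h : Λ → β) {x : List β} {w : List Λ}
    (hx : x <:+: w.map h) : ∃ y, y <:+: w ∧ x = y.map h := by
  obtain ⟨s, t, hst⟩ := hx
  set y := (w.drop s.length).take x.length with hy
  refine ⟨y, ((List.take_prefix _ _).isInfix).trans ((List.drop_suffix _ _).isInfix), ?_⟩
  have hlen : s.length + x.length ≤ w.length := by
    have := congrArg List.length hst; simp at this; omega
  have : x = ((w.map h).drop s.length).take x.length := by
    rw [← hst]
    have hassoc : s ++ x ++ t = s ++ (x ++ t) := by simp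
    rw [hassoc, List.drop_left, List.take_left]
  rw [this, hy, List.map_take, List.map_drop]

end Lang

section Machine
variable {σ q : Type*}

def runA (g : q → σ → q) (s : q) (w : List σ) : q := w.foldl g s

theorem runA_append (g : q → σ → q) (s : q) (w1 w2 : List σ) :
    runA g s (w1 ++ w2) = runA g (runA g s w1) w2 := List.foldl_append

theorem seg_succ {α : Type*} (τ : ℕ → α) (i n : ℕ) :
    seg τ i (n + 1) = seg τ i n ++ [τ (i + n)] := by
  have h1 : seg τ (i + n) 1 = [τ (i + n)] := by simp [seg, List.range_succ]
  rw [seg_add, h1]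

/-- The key rigidity lemma: there are `e0 k0` such that any two positions (≥ k0) past `e0`
with equal `k0`-windows behind them have conjugate run-functions. -/
theorem match_lemma [Finite σ] [Finite q] (g : q → σ → q) (ω : ℕ → σ) (hAP : AP ω) :
    ∃ e0 k0 : ℕ, ∀ t₁ t₁' : ℕ, seg ω (e0 + t₁) k0 = seg ω (e0 + t₁') k0 →
      ∃ ρ : q → q, ∀ s, runA g s (seg ω e0 (t₁ + k0)) = runA g (ρ s) (seg ω e0 (t₁' + k0)) := by
  classical
  haveI : Fintype q := Fintype.ofFinite q
  set Img : List σ → Finset q := fun w => Finset.univ.image (fun s => runA g s w) with hImg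
  set S : Set ℕ := {k | ∃ w, Rec ω w ∧ (Img w).card = k} with hS
  have hSne : S.Nonempty := ⟨(Img []).card, [], rec_nil ω, rfl⟩
  set η := sInf S with hη
  obtain ⟨w₀, hw₀rec, hw₀card⟩ : ∃ w, Rec ω w ∧ (Img w).card = η := Nat.sInf_mem hSne
  have hmin : ∀ w, Rec ω w → η ≤ (Img w).card := fun w hw => Nat.sInf_le ⟨w, hw, rfl⟩
  set nw := w₀.length with hnw
  -- regulator for w₀
  obtain ⟨Lw₀, hLw₀⟩ := hAP w₀ hw₀rec
  set Lw := max Lw₀ (nw + 1) with hLwdef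
  have hLw : ∀ j, ∃ i, j ≤ i ∧ i + nw ≤ j + Lw ∧ OccursAt ω w₀ i := by
    intro j
    obtain ⟨i, h1, h2, h3⟩ := hLw₀ j
    exact ⟨i, h1, by omega, h3⟩
  set IsEnd : ℕ → Prop := fun e => ∃ s, e = s + nw ∧ OccursAt ω w₀ s with hIsEnd
  have hEndWin : ∀ j, ∃ e, IsEnd e ∧ j + nw ≤ e ∧ e ≤ j + Lw := by
    intro j
    obtain ⟨i, h1, h2, h3⟩ := hLw j
    exact ⟨i + nw, ⟨i, rfl, h3⟩, by omega, by omega⟩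
  -- lateness thresholds
  choose Nω hNω using (fun n => late_rec ω n)
  set LB := Lw + nw + 2 with hLB
  set NB := (Finset.range (nw + LB + 1)).sup Nω with hNB
  have hNBs : ∀ l, l ≤ nw + LB → ∀ i, NB ≤ i → Rec ω (seg ω i l) := by
    intro l hl i hi
    exact hNω l i (le_trans (Finset.le_sup (Finset.mem_range.2 (by omega))) hi)
  -- e0 : a late end
  obtain ⟨e0, he0end, he0ge, _⟩ := hEndWin (nw + NB)
  set DF := Img w₀ with hDF
  have hDFcard : DF.card = η := hw₀card
  have hsufDF : ∀ (u : List σ) (s : q), runA g s (u ++ w₀) ∈ DF := by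
    intro u s
    rw [runA_append]
    exact Finset.mem_image.2 ⟨runA g s u, Finset.mem_univ _, rfl⟩
  -- M1core
  have M1core : ∀ a d, IsEnd a → IsEnd (a + d) → e0 ≤ a → d ≤ LB →
      DF.image (fun x => runA g x (seg ω a d)) = DF := by
    rintro a d ⟨sa, hsa, hsaocc⟩ ⟨sb, hsb, hsbocc⟩ hae0 hdLB
    have hsb' : sb = sa + d := by omega
    have hw₀a : seg ω sa nw = w₀ := hsaocc
    have hw₀b : seg ω sb nw = w₀ := hsbocc
    -- the combined word
    have hsplit1 : seg ω sa (nw + d) = w₀ ++ seg ω a d := by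
      rw [seg_add, hw₀a, ← hsa]
    have hsplit2 : seg ω sa (nw + d) = seg ω sa d ++ w₀ := by
      have : nw + d = d + nw := by omega
      rw [this, seg_add, ← hsb', hw₀b]
    -- subset
    have hsub : DF.image (fun x => runA g x (seg ω a d)) ⊆ DF := by
      intro y hy
      obtain ⟨x, hx, rfl⟩ := Finset.mem_image.1 hy
      obtain ⟨x0, -, rfl⟩ := Finset.mem_image.1 hx
      have : runA g (runA g x0 w₀) (seg ω a d) = runA g x0 (seg ω sa d ++ w₀) := by
        rw [← hsplit2, hsplit1, runA_append]
      rw [this]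
      exact hsufDF _ _
    -- recurrence of the combined word
    have hrec : Rec ω (seg ω sa (nw + d)) := by
      apply hNBs (nw + d) (by omega) sa (by omega)
    have hcard : η ≤ (DF.image (fun x => runA g x (seg ω a d))).card := by
      have himg : Img (seg ω sa (nw + d)) = DF.image (fun x => runA g x (seg ω a d)) := by
        rw [hsplit1]
        show Finset.univ.image (fun s => runA g s (w₀ ++ seg ω a d)) = _
        rw [hDF]
        show _ = (Finset.univ.image (fun s => runA g s w₀)).image (fun x => runA g x (seg ω a d))
        rw [Finset.image_image]
        apply Finset.image_congr
        intro s _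
        simp only [Function.comp]
        rw [runA_append]
      rw [← himg]
      exact hmin _ hrec
    apply Finset.eq_of_subset_of_card_le hsub
    omega
  -- M1 full
  have M1 : ∀ d a, IsEnd a → IsEnd (a + d) → e0 ≤ a →
      DF.image (fun x => runA g x (seg ω a d)) = DF := by
    intro d
    induction d using Nat.strong_induction_on with
    | _ d IH =>
      intro a ha hb hae0
      by_cases hd : d ≤ LB
      · exact M1core a d ha hb hae0 hd
      · push_neg at hd
        obtain ⟨e, heEnd, he1, he2⟩ := hEndWin (a + d - (Lw + nw + 1))
        have h1 : a < e := by omega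
        have h2 : e < a + d := by omega
        set d1 := e - a with hd1
        set d2 := a + d - e with hd2
        have hdd : d = d1 + d2 := by omega
        have he : e = a + d1 := by omega
        have hsplit : seg ω a d = seg ω a d1 ++ seg ω e d2 := by
          rw [hdd, seg_add, ← he]
        have himg : DF.image (fun x => runA g x (seg ω a d)) =
            (DF.image (fun x => runA g x (seg ω a d1))).image (fun x => runA g x (seg ω e d2)) := by
          conv_rhs => rw [Finset.image_image]
          apply Finset.image_congr
          intro s _
          simp only [Function.comp]
          rw [hsplit, runA_append]
        rw [himg]
        rw [IH d1 (by omega) a ha (he ▸ heEnd) hae0]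
        have : a + d = e + d2 := by omega
        exact IH d2 (by omega) e heEnd (by rw [← this]; exact hb) (by omega)
  -- the main construction
  set k0 := Lw with hk0
  refine ⟨e0, k0, ?_⟩
  intro t₁ t₁' hwin
  have hwinpt : ∀ k, k < k0 → ω (e0 + t₁ + k) = ω (e0 + t₁' + k) := by
    intro k hk
    exact (seg_eq_iff ω).1 hwin k hk
  -- canonical end offset r within the window
  have hexr : ∃ r, nw ≤ r ∧ r ≤ k0 ∧ seg ω (e0 + t₁ + (r - nw)) nw = w₀ := by
    obtain ⟨e, ⟨s, hs, hocc⟩, he1, he2⟩ := hEndWin (e0 + t₁)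
    refine ⟨e - (e0 + t₁), by omega, by omega, ?_⟩
    have : e0 + t₁ + (e - (e0 + t₁) - nw) = s := by omega
    rw [this]
    exact hocc
  set r := Nat.find hexr with hr
  obtain ⟨hrnw, hrk0, hrocc⟩ := Nat.find_spec hexr
  -- the same r works for t₁' : occurrence transfers through the window
  have hrocc' : seg ω (e0 + t₁' + (r - nw)) nw = w₀ := by
    rw [← hrocc]
    apply seg_ext
    intro k hk
    have h1 : e0 + t₁' + (r - nw) + k = e0 + t₁' + ((r - nw) + k) := by omega
    have h2 : e0 + t₁ + (r - nw) + k = e0 + t₁ + ((r - nw) + k) := by omega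
    rw [h1, h2]
    exact (hwinpt ((r - nw) + k) (by omega)).symm
  set k₂ := k0 - r with hk₂
  have hrk₂ : r + k₂ = k0 := by omega
  -- ends at e0 + t₁ + r and e0 + t₁' + r
  have hend1 : IsEnd (e0 + (t₁ + r)) := by
    refine ⟨e0 + t₁ + (r - nw), by omega, hrocc⟩
  have hend1' : IsEnd (e0 + (t₁' + r)) := by
    refine ⟨e0 + t₁' + (r - nw), by omega, hrocc'⟩
  -- middle words agree
  have hmid : seg ω (e0 + (t₁ + r)) k₂ = seg ω (e0 + (t₁' + r)) k₂ := by
    apply seg_ext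
    intro k hk
    have h1 : e0 + (t₁ + r) + k = e0 + t₁ + (r + k) := by omega
    have h2 : e0 + (t₁' + r) + k = e0 + t₁' + (r + k) := by omega
    rw [h1, h2]
    exact hwinpt (r + k) (by omega)
  -- Claim A: values of the long run lie in DF.image (middle-run)
  have claimA : ∀ s, runA g s (seg ω e0 (t₁ + k0)) ∈
      DF.image (fun x => runA g x (seg ω (e0 + (t₁ + r)) k₂)) := by
    intro s
    have hsplitA : seg ω e0 (t₁ + k0) = seg ω e0 (t₁ + r) ++ seg ω (e0 + (t₁ + r)) k₂ := by
      have : t₁ + k0 = (t₁ + r) + k₂ := by omega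
      rw [this, seg_add]
    have hsplitB : seg ω e0 (t₁ + r) = seg ω e0 (t₁ + (r - nw)) ++ w₀ := by
      have h3 : t₁ + r = (t₁ + (r - nw)) + nw := by omega
      rw [h3, seg_add]
      congr 1
      have : e0 + (t₁ + (r - nw)) = e0 + t₁ + (r - nw) := by omega
      rw [this]
      exact hrocc
    rw [hsplitA, runA_append]
    apply Finset.mem_image.2
    refine ⟨runA g s (seg ω e0 (t₁ + r)), ?_, rfl⟩
    rw [hsplitB]
    exact hsufDF _ _
  -- Claim B: each such value is attained by the other long run
  have claimB : ∀ y ∈ DF.image (fun x => runA g x (seg ω (e0 + (t₁' + r)) k₂)),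
      ∃ s, runA g s (seg ω e0 (t₁' + k0)) = y := by
    intro y hy
    obtain ⟨x, hx, rfl⟩ := Finset.mem_image.1 hy
    have hM1 := M1 (t₁' + r) e0 he0end hend1' (le_refl e0)
    rw [← hM1] at hx
    obtain ⟨x0, -, hx0⟩ := Finset.mem_image.1 hx
    refine ⟨x0, ?_⟩
    have hsplitA : seg ω e0 (t₁' + k0) = seg ω e0 (t₁' + r) ++ seg ω (e0 + (t₁' + r)) k₂ := by
      have : t₁' + k0 = (t₁' + r) + k₂ := by omega
      rw [this, seg_add]
    rw [hsplitA, runA_append, hx0]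
  -- conclude
  have key : ∀ s, ∃ y, runA g y (seg ω e0 (t₁' + k0)) = runA g s (seg ω e0 (t₁ + k0)) := by
    intro s
    have hA := claimA s
    rw [hmid] at hA
    exact claimB _ hA
  choose ρ hρ using key
  exact ⟨ρ, fun s => (hρ s).symm⟩

end Machine

section Cover
variable {σ q : Type*}

theorem seg_ext₂ {α : Type*} (τ1 τ2 : ℕ → α) {i j n : ℕ}
    (h : ∀ k < n, τ1 (i + k) = τ2 (j + k)) : seg τ1 i n = seg τ2 j n := by
  apply List.ext_get (by simp)
  intro k h1 h2
  simp only [seg_length] at h1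
  rw [seg_get τ1 i n k h1, seg_get τ2 j n k h1]
  exact h k h1

theorem take_infix {α : Type*} (w : List α) (o n : ℕ) : ((w.drop o).take n) <:+: w :=
  ((List.take_prefix _ _).isInfix).trans ((List.drop_suffix _ _).isInfix)

theorem ap_pair_run [Finite σ] [Finite q] (g : q → σ → q) (ω : ℕ → σ) (hAP : AP ω) :
    ∃ e0 : ℕ, AP (fun t => (ω (e0 + t), fun s => runA g s (seg ω e0 t))) := by
  classical
  obtain ⟨e0, k0, MATCH⟩ := match_lemma g ω hAP
  refine ⟨e0, ?_⟩
  set Θ : ℕ → σ × (q → q) := fun t => (ω (e0 + t), fun s => runA g s (seg ω e0 t)) with hΘ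
  show AP Θ
  haveI : Finite (σ × (q → q)) := by infer_instance
  set ℒ : Set (List (σ × (q → q))) := {x | Rec Θ x} with hℒ
  have hℒgood : GoodIn ℒ ℒ := by
    refine ⟨le_refl _, fun x w hw hxw => rec_infix Θ hw hxw, fun n => ?_⟩
    obtain ⟨x, h1, h2⟩ := exists_rec_of_length Θ n
    exact ⟨x, h2, h1⟩
  obtain ⟨L, hLgood, hLmin⟩ := exists_minimal_good ℒ hℒgood
  have hLusr := usr_of_minimal hLgood hLmin
  choose Nω hNω using (fun n => late_rec ω n)
  -- the covering lemma
  have COVER : ∀ m, ∃ N, ∀ i, N ≤ i →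
      ∃ hm : (σ × (q → q)) → (σ × (q → q)), seg Θ i m ∈ (fun u => u.map hm) '' L := by
    intro m
    refine ⟨Nω (k0 + m) + k0, fun i hi => ?_⟩
    obtain ⟨i₁, rfl⟩ : ∃ i₁, i = i₁ + k0 := ⟨i - k0, by omega⟩
    set W := seg ω (e0 + i₁) (k0 + m) with hW
    have hWrec : Rec ω W := hNω (k0 + m) (e0 + i₁) (by omega)
    obtain ⟨ℓW, hℓW⟩ := hAP W hWrec
    obtain ⟨u, huL, hulen⟩ := hLgood.2.2 (ℓW + k0 + m)
    have huRec : Rec Θ u := hLgood.1 huL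
    obtain ⟨P, hP⟩ := huRec.nonempty
    obtain ⟨iW, h1, h2, h3⟩ := hℓW (e0 + P)
    set β := iW - (e0 + P) with hβ
    have hiW : iW = e0 + (P + β) := by omega
    have hWlen : W.length = k0 + m := by simp [hW]
    have hβbound : β + (k0 + m) ≤ ℓW := by rw [hWlen] at h2; omega
    have hWocc : seg ω (e0 + (P + β)) (k0 + m) = seg ω (e0 + i₁) (k0 + m) := by
      have h3' := h3
      rw [OccursAt, hWlen, hiW] at h3'
      rw [h3', hW]
    have hWpt : ∀ k, k < k0 + m → ω (e0 + (P + β) + k) = ω (e0 + i₁ + k) :=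
      fun k hk => (seg_eq_iff ω).1 hWocc k hk
    have hwin : seg ω (e0 + i₁) k0 = seg ω (e0 + (P + β)) k0 := by
      apply seg_ext
      intro k hk
      exact (hWpt k (by omega)).symm
    obtain ⟨ρ, hρ⟩ := MATCH i₁ (P + β) hwin
    -- extend the conjugacy forward
    have hρt : ∀ t, t ≤ m → ∀ s,
        runA g s (seg ω e0 (i₁ + k0 + t)) = runA g (ρ s) (seg ω e0 ((P + β) + k0 + t)) := by
      intro t ht s
      have e1 : seg ω e0 (i₁ + k0 + t) = seg ω e0 (i₁ + k0) ++ seg ω (e0 + (i₁ + k0)) t :=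
        seg_add ω e0 (i₁ + k0) t
      have e2 : seg ω e0 ((P + β) + k0 + t) =
          seg ω e0 ((P + β) + k0) ++ seg ω (e0 + ((P + β) + k0)) t :=
        seg_add ω e0 ((P + β) + k0) t
      have emid : seg ω (e0 + (i₁ + k0)) t = seg ω (e0 + ((P + β) + k0)) t := by
        apply seg_ext₂
        intro k hk
        have a1 : e0 + (i₁ + k0) + k = e0 + i₁ + (k0 + k) := by omega
        have a2 : e0 + ((P + β) + k0) + k = e0 + (P + β) + (k0 + k) := by omega
        rw [a1, a2]
        exact (hWpt (k0 + k) (by omega)).symm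
      rw [e1, e2, runA_append, runA_append, hρ s, emid]
    -- the letter map
    set hm : (σ × (q → q)) → (σ × (q → q)) := fun p => (p.1, fun s => p.2 (ρ s)) with hhm
    have hletters : ∀ k, k < m → Θ (i₁ + k0 + k) = hm (Θ ((P + β) + k0 + k)) := by
      intro k hk
      have hfst : ω (e0 + (i₁ + k0 + k)) = ω (e0 + ((P + β) + k0 + k)) := by
        have a1 : e0 + (i₁ + k0 + k) = e0 + i₁ + (k0 + k) := by omega
        have a2 : e0 + ((P + β) + k0 + k) = e0 + (P + β) + (k0 + k) := by omega
        rw [a1, a2]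
        exact (hWpt (k0 + k) (by omega)).symm
      have hsnd : (fun s => runA g s (seg ω e0 (i₁ + k0 + k))) =
          (fun s => runA g (ρ s) (seg ω e0 ((P + β) + k0 + k))) := by
        funext s
        exact hρt k (by omega) s
      show (ω (e0 + (i₁ + k0 + k)), fun s => runA g s (seg ω e0 (i₁ + k0 + k))) = _
      rw [hfst, hsnd]
    have hsegeq : seg Θ (i₁ + k0) m = (seg Θ ((P + β) + k0) m).map hm := by
      rw [← seg_map]
      apply seg_ext₂
      intro k hk
      exact hletters k hk
    have hmem : seg Θ ((P + β) + k0) m ∈ L := by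
      have hocc : seg Θ (P + (β + k0)) m = (u.drop (β + k0)).take m := by
        apply seg_of_occursAt Θ hP
        omega
      have hinx : seg Θ (P + (β + k0)) m ∈ L := by
        rw [hocc]
        exact hLgood.2.1 huL (take_infix u _ _)
      have : P + (β + k0) = (P + β) + k0 := by omega
      rwa [this] at hinx
    exact ⟨hm, ⟨seg Θ ((P + β) + k0) m, hmem, hsegeq.symm⟩⟩
  -- translates
  set Sh : ((σ × (q → q)) → (σ × (q → q))) → Set (List (σ × (q → q))) :=
    fun h' => (fun u => u.map h') '' L with hSh
  have hShfac : ∀ h', ∀ ⦃x w : List (σ × (q → q))⦄, w ∈ Sh h' → x <:+: w → x ∈ Sh h' := by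
    rintro h' x w ⟨w0, hw0, rfl⟩ hxw
    obtain ⟨y, hyw0, rfl⟩ := infix_map_iff h' hxw
    exact ⟨y, hLgood.2.1 hw0 hyw0, rfl⟩
  have hShusr : ∀ h', ∀ v ∈ Sh h', ∃ ℓ, ∀ w ∈ Sh h', ℓ ≤ w.length → v <:+: w := by
    rintro h' v ⟨v0, hv0, rfl⟩
    obtain ⟨ℓ, hℓ⟩ := hLusr v0 hv0
    refine ⟨ℓ, ?_⟩
    rintro w ⟨w0, hw0, rfl⟩ hwlen
    have : v0 <:+: w0 := hℓ w0 hw0 (by simpa using hwlen)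
    exact this.map h'
  haveI : Fintype ((σ × (q → q)) → (σ × (q → q))) := Fintype.ofFinite _
  have hdis : ∀ p : ((σ × (q → q)) → (σ × (q → q))) × ((σ × (q → q)) → (σ × (q → q))),
      ∃ mm, Sh p.1 ≠ Sh p.2 → ∀ w, mm ≤ w.length → ¬ (w ∈ Sh p.1 ∧ w ∈ Sh p.2) := by
    intro p
    by_cases hne : Sh p.1 = Sh p.2
    · exact ⟨0, fun hcon => absurd hne hcon⟩
    · obtain ⟨mm, hmm⟩ :=
        eventually_disjoint (hShfac p.1) (hShfac p.2) (hShusr p.1) (hShusr p.2) hne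
      exact ⟨mm, fun _ => hmm⟩
  choose md hmd using hdis
  set m1 := Finset.univ.sup md with hm1def
  have hm1 : ∀ p, md p ≤ m1 := fun p => Finset.le_sup (Finset.mem_univ p)
  set m2 := m1 + 1 with hm2def
  have hglue : ∀ h1 h2 w, w ∈ Sh h1 → w ∈ Sh h2 → m1 ≤ w.length → Sh h1 = Sh h2 := by
    intro h1 h2 w hw1 hw2 hwl
    by_contra hne
    exact hmd (h1, h2) hne w (le_trans (hm1 _) hwl) ⟨hw1, hw2⟩
  obtain ⟨N2, hN2⟩ := COVER m2
  have hclex : ∀ i, ∃ hm, N2 ≤ i → seg Θ i m2 ∈ Sh hm := by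
    intro i
    by_cases hi : N2 ≤ i
    · obtain ⟨hm, hmem⟩ := hN2 i hi
      exact ⟨hm, fun _ => hmem⟩
    · exact ⟨id, fun hcon => absurd hcon hi⟩
  choose cl hcl using hclex
  have hconst : ∀ i, N2 ≤ i → Sh (cl i) = Sh (cl N2) := by
    intro i
    induction i with
    | zero =>
      intro hz
      have : N2 = 0 := by omega
      rw [this]
    | succ i IH =>
      intro hsucc
      rcases Nat.lt_or_ge N2 (i + 1) with h' | h'
      · have hNi : N2 ≤ i := by omega
        have hx1 : seg Θ (i + 1) m1 ∈ Sh (cl i) := by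
          have hbig := hcl i hNi
          have he : seg Θ (i + 1) m1 = ((seg Θ i m2).drop 1).take m1 := by
            rw [seg_extract Θ (by omega)]
          rw [he]
          exact hShfac _ hbig (take_infix _ _ _)
        have hx2 : seg Θ (i + 1) m1 ∈ Sh (cl (i + 1)) := by
          have hbig := hcl (i + 1) hsucc
          have he : seg Θ (i + 1) m1 = ((seg Θ (i + 1) m2).drop 0).take m1 := by
            rw [seg_extract Θ (by omega)]
          rw [he]
          exact hShfac _ hbig (take_infix _ _ _)
        have heq : Sh (cl (i + 1)) = Sh (cl i) := by
          apply hglue _ _ (seg Θ (i + 1) m1) hx2 hx1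
          simp
        rw [heq]
        exact IH hNi
      · have : N2 = i + 1 := by omega
        rw [this]
  set Lhat := Sh (cl N2) with hLhat
  have hwind : ∀ m, ∃ N, ∀ i, N ≤ i → seg Θ i m ∈ Lhat := by
    intro m
    obtain ⟨N', hN'⟩ := COVER (m + m2)
    refine ⟨max N' N2, fun i hi => ?_⟩
    obtain ⟨hm, hmem⟩ := hN' i (le_trans (le_max_left _ _) hi)
    have hfirst : seg Θ i m2 ∈ Sh hm := by
      have he : seg Θ i m2 = ((seg Θ i (m + m2)).drop 0).take m2 := by
        rw [seg_extract Θ (by omega)]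
        simp
      rw [he]
      exact hShfac _ hmem (take_infix _ _ _)
    have hcli := hcl i (le_trans (le_max_right _ _) hi)
    have heq : Sh hm = Lhat := by
      have h1 : Sh hm = Sh (cl i) := by
        apply hglue _ _ (seg Θ i m2) hfirst hcli
        simp [hm2def]
      rw [h1, hLhat]
      exact hconst i (le_trans (le_max_right _ _) hi)
    have he2 : seg Θ i m = ((seg Θ i (m + m2)).drop 0).take m := by
      rw [seg_extract Θ (by omega)]
      simp
    rw [he2, ← heq]
    exact hShfac _ hmem (take_infix _ _ _)
  -- final: AP Θ
  intro x hx
  rcases Nat.eq_zero_or_pos x.length with hn0 | hnpos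
  · refine ⟨x.length, fun j => ⟨j, le_refl j, by omega, ?_⟩⟩
    have hxnil : x = [] := List.length_eq_zero_iff.mp hn0
    rw [hxnil]
    show seg Θ j 0 = []
    simp
  · set n := x.length with hn
    obtain ⟨Nx, hNx⟩ := hwind (n + m2)
    obtain ⟨i0, hi0ge, hi0occ⟩ := rec_unbounded Θ hx Nx
    have hxin : x ∈ Lhat := by
      have hbig := hNx i0 hi0ge
      have hxe : x = ((seg Θ i0 (n + m2)).drop 0).take n := by
        rw [seg_extract Θ (by omega)]
        simp only [Nat.add_zero]
        exact hi0occ.symm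
      rw [hxe]
      exact hShfac _ hbig (take_infix _ _ _)
    obtain ⟨ℓx, hℓx⟩ := hShusr _ x hxin
    obtain ⟨Nw, hNw⟩ := hwind (ℓx + n)
    apply ap_clause_of_late Θ (N := Nw) (l := ℓx + n)
    intro j hj
    have hbig := hNw j hj
    have hinf : x <:+: seg Θ j (ℓx + n) := by
      apply hℓx _ hbig
      simp
    obtain ⟨o, ho1, ho2⟩ := infix_seg Θ hinf
    exact ⟨j + o, by omega, by omega, ho2⟩

end Cover

theorem ap_autoOutput_aux {σ δ q : Type*} [Finite σ] [Finite δ] [Finite q]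
    (f : q → σ → q × δ) (q0 : q) (ω : ℕ → σ) (h : AP ω) :
    AP (autoOutput f q0 ω) := by
  classical
  set g : q → σ → q := fun s a => (f s a).1 with hg
  obtain ⟨e0, hΘ⟩ := ap_pair_run g ω h
  have hstates : ∀ t, autoStates f q0 ω (e0 + t) = runA g (autoStates f q0 ω e0) (seg ω e0 t) := by
    intro t
    induction t with
    | zero => simp [runA]
    | succ t IH =>
      have he : e0 + (t + 1) = (e0 + t) + 1 := by omega
      rw [he]
      show (f (autoStates f q0 ω (e0 + t)) (ω (e0 + t))).1 = _
      rw [IH, seg_succ, runA_append]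
      rfl
  set cod : σ × (q → q) → δ := fun p => (f (p.2 (autoStates f q0 ω e0)) p.1).2 with hcod
  have hcomp : (fun t => autoOutput f q0 ω (e0 + t)) =
      (fun t => cod ((fun u => (ω (e0 + u), fun s => runA g s (seg ω e0 u))) t)) := by
    funext t
    simp only [autoOutput, hcod]
    rw [hstates t]
  have hsuf : AP (fun t => autoOutput f q0 ω (e0 + t)) := by
    rw [hcomp]
    exact ap_coding _ cod hΘ
  exact ap_of_suffix _ hsuf

/-- Finite automata preserve almost periodicity. -/
theorem ap_autoOutput {σ δ q : Type*} [Finite σ] [Finite δ] [Finite q]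
    (f : q → σ → q × δ) (q0 : q) (ω : ℕ → σ) (h : AP ω) :
    AP (autoOutput f q0 ω) :=
  ap_autoOutput_aux f q0 ω h
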